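/- For every minimizer ω̂_j of the relaxed objective g and every minimizer π̂ of the partially penalized objective f(b) = (2n)^{-1} ‖x_j − ∑_{k≠j} b_k x_k‖₂² + λ_j ∑_{k∈Ŝᶜ∖{j}} v_{jk} |b_k| over b ∈ ℝ^{{1,…,p}∖{j}}, the two residual vectors coincide: x_j − ∑_{k≠j} π̂_k x_k = ψ_j^{(j)} − ∑_{k∈Ŝᶜ∖{j}} (ω̂_j)_k ψ_k^{(j)} = z_j. In particular, the hybrid orthogonalization vector z_j does not depend on the choice of minimizer of either problem. -/

import Mathlib

/-!
Statement 0 (Proposition 1 of the paper).  For every minimizer `ω̂` of the relaxed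
objective `g` and every minimizer `π̂` of the partially penalized objective `f`,
the two residual vectors coincide:
`x_j − ∑_{k≠j} π̂_k x_k = ψ_j^{(j)} − ∑_{k∈Ŝᶜ∖{j}} ω̂_k ψ_k^{(j)} = z_j`.
-/

noncomputable section

open Finset Matrix

namespace HOT

variable {n p : ℕ}

/-- `k`-th column of `X`. -/
def col (X : Matrix (Fin n) (Fin p) ℝ) (k : Fin p) : Fin n → ℝ := fun i => X i k

/-- Submatrix of `X` consisting of the columns indexed by `S`. -/
def sub (X : Matrix (Fin n) (Fin p) ℝ) (S : Finset (Fin p)) : Matrix (Fin n) ↥S ℝ :=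
  Matrix.of fun i k => X i (k : Fin p)

/-- Gram matrix `X_Sᵀ X_S`. -/
def gram (X : Matrix (Fin n) (Fin p) ℝ) (S : Finset (Fin p)) : Matrix ↥S ↥S ℝ :=
  (sub X S)ᵀ * sub X S

/-- Orthogonal projection `P_S = X_S (X_Sᵀ X_S)⁻¹ X_Sᵀ` onto the column space of `X_S`. -/
def proj (X : Matrix (Fin n) (Fin p) ℝ) (S : Finset (Fin p)) : Matrix (Fin n) (Fin n) ℝ :=
  sub X S * (gram X S)⁻¹ * (sub X S)ᵀ

/-- `ψ_k^{(j)} = (I_n − P_{Ŝ∖{j}}) x_k`. -/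
def psi (X : Matrix (Fin n) (Fin p) ℝ) (S : Finset (Fin p)) (j k : Fin p) : Fin n → ℝ :=
  col X k - (proj X (S.erase j)).mulVec (col X k)

/-- `v_{jk} = ‖ψ_k^{(j)}‖₂ / √n`. -/
def v (X : Matrix (Fin n) (Fin p) ℝ) (S : Finset (Fin p)) (j k : Fin p) : ℝ :=
  Real.sqrt (∑ i, (psi X S j k i) ^ 2) / Real.sqrt n

/-- The relaxed-orthogonalization objective
`g(b) = (2n)⁻¹ ‖ψ_j^{(j)} − ∑_{k∈Ŝᶜ∖{j}} b_k ψ_k^{(j)}‖₂² + λ_j ∑_{k∈Ŝᶜ∖{j}} v_{jk} |b_k|`. -/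
def gObj (X : Matrix (Fin n) (Fin p) ℝ) (S : Finset (Fin p)) (j : Fin p) (lam : ℝ)
    (b : Fin p → ℝ) : ℝ :=
  (2 * n : ℝ)⁻¹ * ∑ i, (psi X S j j i - ∑ k ∈ Sᶜ.erase j, b k * psi X S j k i) ^ 2
    + lam * ∑ k ∈ Sᶜ.erase j, v X S j k * |b k|

/-- The partially penalized objective
`f(b) = (2n)⁻¹ ‖x_j − ∑_{k≠j} b_k x_k‖₂² + λ_j ∑_{k∈Ŝᶜ∖{j}} v_{jk} |b_k|`. -/
def fObj (X : Matrix (Fin n) (Fin p) ℝ) (S : Finset (Fin p)) (j : Fin p) (lam : ℝ)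
    (b : Fin p → ℝ) : ℝ :=
  (2 * n : ℝ)⁻¹ * ∑ i, (col X j i - ∑ k ∈ Finset.univ.erase j, b k * col X k i) ^ 2
    + lam * ∑ k ∈ Sᶜ.erase j, v X S j k * |b k|

/-- The hybrid orthogonalization vector `z_j = ψ_j^{(j)} − ∑_{k∈Ŝᶜ∖{j}} ω̂_k ψ_k^{(j)}`. -/
def zvec (X : Matrix (Fin n) (Fin p) ℝ) (S : Finset (Fin p)) (j : Fin p)
    (ωhat : Fin p → ℝ) : Fin n → ℝ :=
  fun i => psi X S j j i - ∑ k ∈ Sᶜ.erase j, ωhat k * psi X S j k i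

lemma gram_symm (X : Matrix (Fin n) (Fin p) ℝ) (T : Finset (Fin p)) :
    (gram X T)ᵀ = gram X T := by
  simp [gram, Matrix.transpose_mul]

lemma proj_symm (X : Matrix (Fin n) (Fin p) ℝ) (T : Finset (Fin p)) :
    (proj X T)ᵀ = proj X T := by
  simp only [proj, Matrix.transpose_mul, Matrix.transpose_transpose,
    Matrix.transpose_nonsing_inv, gram_symm, Matrix.mul_assoc]

lemma proj_mul_sub (X : Matrix (Fin n) (Fin p) ℝ) (T : Finset (Fin p))
    (hG : IsUnit (gram X T)) : proj X T * sub X T = sub X T := by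
  have h : (gram X T)⁻¹ * gram X T = 1 :=
    Matrix.nonsing_inv_mul _ ((Matrix.isUnit_iff_isUnit_det _).mp hG)
  calc proj X T * sub X T
      = sub X T * ((gram X T)⁻¹ * gram X T) := by
        simp only [proj, gram, Matrix.mul_assoc]
    _ = sub X T := by rw [h, Matrix.mul_one]

lemma proj_mulVec_col (X : Matrix (Fin n) (Fin p) ℝ) (T : Finset (Fin p))
    (hG : IsUnit (gram X T)) {k : Fin p} (hk : k ∈ T) :
    proj X T *ᵥ col X k = col X k := by
  funext i
  have h := congrArg (fun M => M i ⟨k, hk⟩) (proj_mul_sub X T hG)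
  simpa [Matrix.mul_apply, Matrix.mulVec, dotProduct, sub, col] using h

lemma resid_dot (X : Matrix (Fin n) (Fin p) ℝ) (T : Finset (Fin p))
    (hG : IsUnit (gram X T)) (y : Fin n → ℝ) {k : Fin p} (hk : k ∈ T) :
    ∑ i, (y i - (proj X T *ᵥ y) i) * col X k i = 0 := by
  have hsym := proj_symm X T
  have hcol := proj_mulVec_col X T hG hk
  have h1 : ∑ i, (proj X T *ᵥ y) i * col X k i = ∑ i, y i * col X k i := by
    calc ∑ i, (proj X T *ᵥ y) i * col X k i
        = (col X k) ⬝ᵥ (proj X T *ᵥ y) := by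
          simp [dotProduct, col, mul_comm]
      _ = (col X k ᵥ* proj X T) ⬝ᵥ y := Matrix.dotProduct_mulVec _ _ _
      _ = (proj X T *ᵥ col X k) ⬝ᵥ y := by
          have h2 := Matrix.mulVec_transpose (proj X T) (col X k)
          rw [hsym] at h2
          rw [h2]
      _ = ∑ i, y i * col X k i := by rw [hcol]; simp [dotProduct, col, mul_comm]
  simp only [sub_mul, Finset.sum_sub_distrib, h1, sub_self]

lemma proj_fit (X : Matrix (Fin n) (Fin p) ℝ) (T : Finset (Fin p)) (y : Fin n → ℝ) :
    ∃ a : Fin p → ℝ, ∀ i, ∑ k ∈ T, a k * col X k i = (proj X T *ᵥ y) i := by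
  classical
  set w : ↥T → ℝ := ((gram X T)⁻¹ * (sub X T)ᵀ) *ᵥ y with hw
  refine ⟨fun k => if h : k ∈ T then w ⟨k, h⟩ else 0, fun i => ?_⟩
  have h1 : (proj X T *ᵥ y) i = (sub X T *ᵥ w) i := by
    rw [hw, Matrix.mulVec_mulVec]
    simp only [proj, Matrix.mul_assoc]
  rw [h1]
  have h2 : (sub X T *ᵥ w) i
      = ∑ k : ↥T, (if h : (k : Fin p) ∈ T then w ⟨k, h⟩ else 0) * col X k i := by
    simp only [Matrix.mulVec, dotProduct, sub, Matrix.of_apply, col]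
    refine Finset.sum_congr rfl fun k _ => ?_
    rw [dif_pos k.2]
    ring
  rw [h2, Finset.sum_coe_sort T (fun k => (if h : k ∈ T then w ⟨k, h⟩ else 0) * col X k i)]

theorem residuals_coincide (hn : 0 < n)
    (X : Matrix (Fin n) (Fin p) ℝ) (j : Fin p) (S : Finset (Fin p))
    (hG : IsUnit (gram X (S.erase j)))
    (lam : ℝ) (hlam : 0 < lam)
    (ωhat : Fin p → ℝ) (hω : ∀ b : Fin p → ℝ, gObj X S j lam ωhat ≤ gObj X S j lam b)
    (πhat : Fin p → ℝ) (hπ : ∀ b : Fin p → ℝ, fObj X S j lam πhat ≤ fObj X S j lam b) :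
    (fun i => col X j i - ∑ k ∈ Finset.univ.erase j, πhat k * col X k i)
      = zvec X S j ωhat := by
  classical
  have h2n : (0:ℝ) < (2*n:ℝ)⁻¹ := by positivity
  -- splitting the index set
  have hU : Finset.univ.erase j = (S.erase j) ∪ Sᶜ.erase j := by
    ext k
    simp only [Finset.mem_erase, Finset.mem_union, Finset.mem_compl, Finset.mem_univ, and_true]
    tauto
  have hdisj : Disjoint (S.erase j) (Sᶜ.erase j) := by
    rw [Finset.disjoint_left]
    intro k hk hk'
    simp only [Finset.mem_erase, Finset.mem_compl] at hk hk'
    exact hk'.2 hk.2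
  have hsplit : ∀ F : Fin p → ℝ, ∑ k ∈ Finset.univ.erase j, F k
      = ∑ k ∈ S.erase j, F k + ∑ k ∈ Sᶜ.erase j, F k := fun F => by
    rw [hU, Finset.sum_union hdisj]
  -- the partial residual target
  set y : (Fin p → ℝ) → (Fin n → ℝ) :=
    fun c i => col X j i - ∑ k ∈ Sᶜ.erase j, c k * col X k i with hydef
  -- z is the projection residual of y
  have hzy : ∀ c i, zvec X S j c i = y c i - (proj X (S.erase j) *ᵥ y c) i := by
    intro c i
    have hPlin : (proj X (S.erase j) *ᵥ y c) i
        = (proj X (S.erase j) *ᵥ col X j) i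
          - ∑ k ∈ Sᶜ.erase j, c k * (proj X (S.erase j) *ᵥ col X k) i := by
      simp only [Matrix.mulVec, dotProduct, hydef, col, mul_sub,
        Finset.sum_sub_distrib, Finset.mul_sum]
      congr 1
      rw [Finset.sum_comm]
      exact Finset.sum_congr rfl fun k _ => Finset.sum_congr rfl fun l _ => by ring
    simp only [zvec, psi, Pi.sub_apply]
    rw [hPlin]
    have hsum : ∑ k ∈ Sᶜ.erase j, c k * (col X k i - (proj X (S.erase j) *ᵥ col X k) i)
        = (∑ k ∈ Sᶜ.erase j, c k * col X k i)
          - ∑ k ∈ Sᶜ.erase j, c k * (proj X (S.erase j) *ᵥ col X k) i := by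
      rw [← Finset.sum_sub_distrib]
      exact Finset.sum_congr rfl fun k _ => mul_sub _ _ _
    rw [hsum]
    simp only [hydef]
    ring
  -- objective rewrites
  have hgz : ∀ c, gObj X S j lam c
      = (2*n:ℝ)⁻¹ * ∑ i, (zvec X S j c i)^2
        + lam * ∑ k ∈ Sᶜ.erase j, v X S j k * |c k| := fun c => rfl
  have hfy : ∀ b, fObj X S j lam b
      = (2*n:ℝ)⁻¹ * ∑ i, (y b i - ∑ k ∈ S.erase j, b k * col X k i)^2
        + lam * ∑ k ∈ Sᶜ.erase j, v X S j k * |b k| := by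
    intro b
    unfold fObj
    congr 2
    refine Finset.sum_congr rfl fun i _ => ?_
    rw [hsplit (fun k => b k * col X k i)]
    simp only [hydef]
    ring
  -- Pythagoras
  have hpyth : ∀ c (b : Fin p → ℝ),
      ∑ i, (y c i - ∑ k ∈ S.erase j, b k * col X k i)^2
        = ∑ i, (zvec X S j c i)^2
          + ∑ i, ((proj X (S.erase j) *ᵥ y c) i - ∑ k ∈ S.erase j, b k * col X k i)^2 := by
    intro c b
    obtain ⟨a, ha⟩ := proj_fit X (S.erase j) (y c)
    have hwk : ∀ i, (proj X (S.erase j) *ᵥ y c) i - ∑ k ∈ S.erase j, b k * col X k i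
        = ∑ k ∈ S.erase j, (a k - b k) * col X k i := by
      intro i
      rw [← ha i, ← Finset.sum_sub_distrib]
      exact Finset.sum_congr rfl fun k _ => (sub_mul _ _ _).symm
    have hcross : ∑ i, zvec X S j c i
        * ((proj X (S.erase j) *ᵥ y c) i - ∑ k ∈ S.erase j, b k * col X k i) = 0 := by
      have h1 : ∀ i, zvec X S j c i
          * ((proj X (S.erase j) *ᵥ y c) i - ∑ k ∈ S.erase j, b k * col X k i)
          = ∑ k ∈ S.erase j, (a k - b k) * (zvec X S j c i * col X k i) := by
        intro i
        rw [hwk i, Finset.mul_sum]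
        exact Finset.sum_congr rfl fun k _ => by ring
      simp only [h1]
      rw [Finset.sum_comm]
      refine Finset.sum_eq_zero fun k hk => ?_
      rw [← Finset.mul_sum]
      have h2 : ∑ i, zvec X S j c i * col X k i = 0 := by
        calc ∑ i, zvec X S j c i * col X k i
            = ∑ i, (y c i - (proj X (S.erase j) *ᵥ y c) i) * col X k i :=
              Finset.sum_congr rfl fun i _ => by rw [hzy]
          _ = 0 := resid_dot X (S.erase j) hG (y c) hk
      rw [h2, mul_zero]
    calc ∑ i, (y c i - ∑ k ∈ S.erase j, b k * col X k i)^2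
        = ∑ i, ((zvec X S j c i)^2
            + 2 * (zvec X S j c i
                * ((proj X (S.erase j) *ᵥ y c) i - ∑ k ∈ S.erase j, b k * col X k i))
            + ((proj X (S.erase j) *ᵥ y c) i - ∑ k ∈ S.erase j, b k * col X k i)^2) := by
          refine Finset.sum_congr rfl fun i _ => ?_
          have h := hzy c i
          have hd : y c i - ∑ k ∈ S.erase j, b k * col X k i
              = zvec X S j c i
                + ((proj X (S.erase j) *ᵥ y c) i - ∑ k ∈ S.erase j, b k * col X k i) := by
            rw [h]; ring
          rw [hd]; ring
      _ = ∑ i, (zvec X S j c i)^2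
            + 2 * ∑ i, (zvec X S j c i
                * ((proj X (S.erase j) *ᵥ y c) i - ∑ k ∈ S.erase j, b k * col X k i))
            + ∑ i, ((proj X (S.erase j) *ᵥ y c) i - ∑ k ∈ S.erase j, b k * col X k i)^2 := by
          rw [Finset.sum_add_distrib, Finset.sum_add_distrib, Finset.mul_sum]
      _ = _ := by rw [hcross]; ring
  -- f dominates g
  have hfg : ∀ b, gObj X S j lam b ≤ fObj X S j lam b := by
    intro b
    rw [hgz b, hfy b, hpyth b b]
    have h0 : 0 ≤ ∑ i, ((proj X (S.erase j) *ᵥ y b) i - ∑ k ∈ S.erase j, b k * col X k i)^2 :=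
      Finset.sum_nonneg fun i _ => sq_nonneg _
    nlinarith [mul_nonneg h2n.le h0]
  -- g is attained by f
  have hattain : ∀ c, ∃ b, fObj X S j lam b = gObj X S j lam c := by
    intro c
    obtain ⟨a, ha⟩ := proj_fit X (S.erase j) (y c)
    set b : Fin p → ℝ := fun k => if k ∈ S.erase j then a k else c k with hbdef
    refine ⟨b, ?_⟩
    have hbC : ∀ k ∈ Sᶜ.erase j, b k = c k := by
      intro k hk
      simp only [hbdef]
      rw [if_neg]
      simp only [Finset.mem_erase, Finset.mem_compl] at hk
      simp only [Finset.mem_erase]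
      tauto
    have hyb : y b = y c := by
      funext i
      simp only [hydef]
      congr 1
      exact Finset.sum_congr rfl fun k hk => by rw [hbC k hk]
    have hbA : ∀ i, ∑ k ∈ S.erase j, b k * col X k i = (proj X (S.erase j) *ᵥ y c) i := by
      intro i
      rw [← ha i]
      refine Finset.sum_congr rfl fun k hk => ?_
      simp only [hbdef]
      rw [if_pos hk]
    have hloss : ∑ i, (y b i - ∑ k ∈ S.erase j, b k * col X k i)^2
        = ∑ i, (zvec X S j c i)^2 := by
      refine Finset.sum_congr rfl fun i _ => ?_
      rw [hyb, hbA i, hzy c i]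
    have hpen : ∑ k ∈ Sᶜ.erase j, v X S j k * |b k|
        = ∑ k ∈ Sᶜ.erase j, v X S j k * |c k| :=
      Finset.sum_congr rfl fun k hk => by rw [hbC k hk]
    rw [hfy b, hgz c, hloss, hpen]
  -- the chain of (in)equalities
  obtain ⟨bstar, hbstar⟩ := hattain ωhat
  have e1 : gObj X S j lam ωhat ≤ gObj X S j lam πhat := hω πhat
  have e2 : gObj X S j lam πhat ≤ fObj X S j lam πhat := hfg πhat
  have e3 : fObj X S j lam πhat ≤ gObj X S j lam ωhat :=
    le_of_le_of_eq (hπ bstar) hbstar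
  have egg : gObj X S j lam πhat = gObj X S j lam ωhat := le_antisymm (by linarith) e1
  have efg : fObj X S j lam πhat = gObj X S j lam πhat := le_antisymm (by linarith) e2
  -- the fitted part of πhat equals the projection
  have hw0 : ∀ i, (proj X (S.erase j) *ᵥ y πhat) i - ∑ k ∈ S.erase j, πhat k * col X k i = 0 := by
    have h := efg
    rw [hfy, hgz, hpyth πhat πhat] at h
    have hDnn : 0 ≤ ∑ i, ((proj X (S.erase j) *ᵥ y πhat) i
        - ∑ k ∈ S.erase j, πhat k * col X k i)^2 :=
      Finset.sum_nonneg fun i _ => sq_nonneg _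
    have hprod : (2*n:ℝ)⁻¹ * ∑ i, ((proj X (S.erase j) *ᵥ y πhat) i
        - ∑ k ∈ S.erase j, πhat k * col X k i)^2 ≤ (2*n:ℝ)⁻¹ * 0 := by
      rw [mul_zero]; linarith
    have hD0 : ∑ i, ((proj X (S.erase j) *ᵥ y πhat) i
        - ∑ k ∈ S.erase j, πhat k * col X k i)^2 ≤ 0 := by
      have := (mul_le_mul_iff_right₀ h2n).mp hprod
      linarith
    have hsum0 := le_antisymm hD0 hDnn
    intro i
    have hterm := (Finset.sum_eq_zero_iff_of_nonneg
      (fun i _ => sq_nonneg _)).mp hsum0 i (Finset.mem_univ i)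
    exact pow_eq_zero_iff (two_ne_zero) |>.mp hterm
  have hres : ∀ i, col X j i - ∑ k ∈ Finset.univ.erase j, πhat k * col X k i
      = zvec X S j πhat i := by
    intro i
    rw [hsplit (fun k => πhat k * col X k i), hzy πhat i]
    have h := hw0 i
    simp only [hydef]
    simp only [hydef] at h
    linarith
  -- uniqueness of the fitted residual of g
  have hzeq : ∀ i, zvec X S j πhat i = zvec X S j ωhat i := by
    set m : Fin p → ℝ := fun k => (ωhat k + πhat k)/2 with hmdef
    have hzm : ∀ i, zvec X S j m i
        = (zvec X S j ωhat i + zvec X S j πhat i)/2 := by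
      intro i
      simp only [zvec, hmdef]
      rw [show ∑ k ∈ Sᶜ.erase j, (ωhat k + πhat k)/2 * psi X S j k i
          = (∑ k ∈ Sᶜ.erase j, ωhat k * psi X S j k i
            + ∑ k ∈ Sᶜ.erase j, πhat k * psi X S j k i)/2 from by
        rw [← Finset.sum_add_distrib, Finset.sum_div]
        exact Finset.sum_congr rfl fun k _ => by ring]
      ring
    have hpenm : ∑ k ∈ Sᶜ.erase j, v X S j k * |m k|
        ≤ ((∑ k ∈ Sᶜ.erase j, v X S j k * |ωhat k|)
          + ∑ k ∈ Sᶜ.erase j, v X S j k * |πhat k|)/2 := by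
      rw [← Finset.sum_add_distrib, Finset.sum_div]
      refine Finset.sum_le_sum fun k hk => ?_
      have hv : 0 ≤ v X S j k := div_nonneg (Real.sqrt_nonneg _) (Real.sqrt_nonneg _)
      have habs : |m k| ≤ (|ωhat k| + |πhat k|)/2 := by
        simp only [hmdef]
        calc |(ωhat k + πhat k)/2| = |ωhat k + πhat k|/2 := by
              rw [abs_div, abs_two]
          _ ≤ (|ωhat k| + |πhat k|)/2 := by gcongr; exact abs_add_le _ _
      calc v X S j k * |m k| ≤ v X S j k * ((|ωhat k| + |πhat k|)/2) :=
            mul_le_mul_of_nonneg_left habs hv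
        _ = (v X S j k * |ωhat k| + v X S j k * |πhat k|)/2 := by ring
    have hDnn : 0 ≤ ∑ i, ((zvec X S j ωhat i - zvec X S j πhat i)/2)^2 :=
      Finset.sum_nonneg fun i _ => sq_nonneg _
    have hsq : ∑ i, (zvec X S j m i)^2
        = (∑ i, (zvec X S j ωhat i)^2 + ∑ i, (zvec X S j πhat i)^2)/2
          - ∑ i, ((zvec X S j ωhat i - zvec X S j πhat i)/2)^2 := by
      have h1 : ∀ i, (zvec X S j m i)^2
          = ((zvec X S j ωhat i)^2 + (zvec X S j πhat i)^2)/2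
            - ((zvec X S j ωhat i - zvec X S j πhat i)/2)^2 := fun i => by
        rw [hzm i]; ring
      calc ∑ i, (zvec X S j m i)^2
          = ∑ i, (((zvec X S j ωhat i)^2 + (zvec X S j πhat i)^2)/2
            - ((zvec X S j ωhat i - zvec X S j πhat i)/2)^2) :=
            Finset.sum_congr rfl fun i _ => h1 i
        _ = _ := by
            rw [Finset.sum_sub_distrib]
            congr 1
            rw [← Finset.sum_div, Finset.sum_add_distrib]
    have hD0 : ∑ i, ((zvec X S j ωhat i - zvec X S j πhat i)/2)^2 ≤ 0 := by
      have h1 := hω m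
      rw [hgz m, hgz ωhat] at h1
      have h2 := egg
      rw [hgz πhat, hgz ωhat] at h2
      have h3 := mul_le_mul_of_nonneg_left hpenm hlam.le
      rw [hsq] at h1
      have h4 : (2*n:ℝ)⁻¹ * ∑ i, ((zvec X S j ωhat i - zvec X S j πhat i)/2)^2
          ≤ (2*n:ℝ)⁻¹ * 0 := by
        rw [mul_zero]; linarith
      exact (mul_le_mul_iff_right₀ h2n).mp h4 |>.trans (le_refl 0)
    have hsum0 := le_antisymm hD0 hDnn
    intro i
    have hterm := (Finset.sum_eq_zero_iff_of_nonneg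
      (fun i _ => sq_nonneg _)).mp hsum0 i (Finset.mem_univ i)
    have h5 := pow_eq_zero_iff (two_ne_zero) |>.mp hterm
    have h6 : zvec X S j ωhat i - zvec X S j πhat i = 0 := by
      field_simp at h5
      linarith
    linarith
  funext i
  exact (hres i).trans (hzeq i)

end HOT
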